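/- One has the inclusions Lf_Q~ ⊆ NN_Q~ ⊆ 2·(Lf_Q~ − Lf_Q~), where Lf_Q~ − Lf_Q~ = {a − b : a, b ∈ Lf_Q~} is the difference body of the section Lf_Q~. -/

import Mathlib

open MeasureTheory Finset

noncomputable section

/-- The space `Q` of even quartics, represented by symmetric coefficient matrices
`a : Fin n → Fin n → ℝ` (the quartic being `∑ i j, a i j * x i ^ 2 * x j ^ 2`). -/
def symSub (n : ℕ) : Submodule ℝ (Fin n → Fin n → ℝ) where
  carrier := {a | ∀ i j, a i j = a j i}
  add_mem' := by
    intro a b ha hb i j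
    simp only [Pi.add_apply, ha i j, hb i j]
  zero_mem' := by intro i j; rfl
  smul_mem' := by
    intro c a ha i j
    simp only [Pi.smul_apply, smul_eq_mul, ha i j]

/-- The even quartic form corresponding to a symmetric coefficient matrix. -/
def qfun {n : ℕ} (a : symSub n) (x : EuclideanSpace ℝ (Fin n)) : ℝ :=
  ∑ i, ∑ j, a.1 i j * (x i)^2 * (x j)^2

/-- The element of `Q` corresponding to `r(x) = (x_1^2 + ... + x_n^2)^2`. -/
def rQ (n : ℕ) : symSub n := ⟨fun _ _ => 1, fun _ _ => rfl⟩

/-- The section `K~ = {f ∈ M : f + r ∈ K}` of a cone `K ⊆ Q`. -/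
def sect {n : ℕ} (σ : Measure (EuclideanSpace ℝ (Fin n))) (K : Set (symSub n)) :
    Set (symSub n) :=
  {a | (∫ x, qfun a x ∂σ) = 0 ∧ a + rQ n ∈ K}

/-- The volume radius of a subset of `M`, computed through a linear isometry `ψ`
of `ℝ^(dim M)` (with Lebesgue measure) onto `M`. -/
def vrad {n d : ℕ} (ψ : EuclideanSpace ℝ (Fin d) →ₗ[ℝ] symSub n)
    (C : Set (symSub n)) : ℝ :=
  ((volume (⇑ψ ⁻¹' C)).toReal /
    (volume (Metric.closedBall (0 : EuclideanSpace ℝ (Fin d)) 1)).toReal) ^ ((1:ℝ)/(d:ℝ))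

/-- `pr_Q(ℓ⁴)` for the linear form `ℓ = ∑ j, v j * x j`, as an element of `Q`:
the projection of `(∑ j, v j x j)⁴` keeping exactly the coefficients of the
monomials `x i² x j²` has coefficient matrix with diagonal entries `v i⁴` and
off-diagonal entries `3 v i² v j²`. -/
def Pmat {n : ℕ} (v : Fin n → ℝ) : symSub n :=
  ⟨fun p q => if p = q then (v p)^4 else 3 * (v p)^2 * (v q)^2, by
    intro p q
    by_cases h : p = q
    · simp [h]
    · simp only [if_neg h, if_neg (Ne.symm h)]
      ring⟩

/-- `Lf_Q`: projections to `Q` of sums of fourth powers of linear forms. -/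
def LfQ (n : ℕ) : Set (symSub n) :=
  {a | ∃ (k : ℕ) (w : Fin k → Fin n → ℝ), a = ∑ i, Pmat (w i)}

/-- `NN_Q`: even quartics with nonnegative coefficients. -/
def NNQ (n : ℕ) : Set (symSub n) :=
  {a | ∀ i j, 0 ≤ a.1 i j}


lemma rpow4 {x : ℝ} (hx : 0 ≤ x) : (x ^ ((4:ℝ)⁻¹)) ^ (4:ℕ) = x := by
  rw [← Real.rpow_natCast (x ^ ((4:ℝ)⁻¹)) 4, ← Real.rpow_mul hx]
  norm_num

lemma symSub_sum_apply {n : ℕ} {ι : Type*} (s : Finset ι) (f : ι → symSub n) (i j : Fin n) :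
    (↑(∑ k ∈ s, f k) : Fin n → Fin n → ℝ) i j = ∑ k ∈ s, (f k).1 i j := by
  rw [AddSubmonoidClass.coe_finset_sum]
  rw [Finset.sum_apply, Finset.sum_apply]

lemma sum_Pmat_mem {n : ℕ} {ι : Type} [Fintype ι] (v : ι → Fin n → ℝ) :
    ∑ i, Pmat (v i) ∈ LfQ n := by
  refine ⟨Fintype.card ι, fun k => v ((Fintype.equivFin ι).symm k), ?_⟩
  exact (Fintype.sum_equiv (Fintype.equivFin ι) (fun i => Pmat (v i))
    (fun k => Pmat (v ((Fintype.equivFin ι).symm k)))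
    (fun x => by simp only [Equiv.symm_apply_apply]))

lemma Pmat_apply {n : ℕ} (v : Fin n → ℝ) (i j : Fin n) :
    (Pmat v).1 i j = if i = j then (v i)^4 else 3 * (v i)^2 * (v j)^2 := rfl

lemma sum_ite_ne_univ {α : Type*} [Fintype α] [DecidableEq α] (i : α) (f : α → ℝ) :
    ∑ q, (if q = i then 0 else f q) = (∑ q, f q) - f i := by
  have h : ∀ q, (if q = i then 0 else f q) = f q - (if q = i then f q else 0) := fun q => by
    by_cases h : q = i <;> simp [h]
  simp only [h, Finset.sum_sub_distrib]
  simp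

def Rrow {n : ℕ} (c : Fin n → Fin n → ℝ) (i : Fin n) : ℝ := (∑ j, c i j) - c i i

def Dd {n : ℕ} (c : Fin n → Fin n → ℝ) (i : Fin n) : ℝ := c i i / 2 + Rrow c i / 6

def wA {n : ℕ} (c : Fin n → Fin n → ℝ) (pq : Fin n × Fin n) : Fin n → ℝ :=
  fun k => (if pq.1 = pq.2 then (c pq.1 pq.1 / 16) ^ ((4:ℝ)⁻¹)
      else (c pq.1 pq.2 / 12) ^ ((4:ℝ)⁻¹))
    * ((if k = pq.1 then 1 else 0) + (if k = pq.2 then 1 else 0))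

def wB {n : ℕ} (c : Fin n → Fin n → ℝ) : Option (Fin n) → Fin n → ℝ
  | none => fun _ => ((6:ℝ)⁻¹) ^ ((4:ℝ)⁻¹)
  | some p => fun k => ((1:ℝ)/3 + Dd c p) ^ ((4:ℝ)⁻¹) * (if k = p then 1 else 0)

lemma sum_if_const {α : Type*} [Fintype α] (P : Prop) [Decidable P] (f : α → ℝ) :
    ∑ q, (if P then f q else 0) = if P then ∑ q, f q else 0 := by
  split_ifs <;> simp

lemma sum_ite_eq_const {α : Type*} [Fintype α] [DecidableEq α] (i : α) (E : ℝ) :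
    ∑ p, (if p = i then E else 0) = E := by simp

lemma Amat_entries {n : ℕ} (c : Fin n → Fin n → ℝ) (hsymm : ∀ i j, c i j = c j i)
    (hc0 : ∀ i j, 0 ≤ c i j) (i j : Fin n) :
    (∑ pq : Fin n × Fin n, Pmat (wA c pq)).1 i j
      = c i j / 2 + (if i = j then Dd c i else 0) := by
  have hzero : ∀ p q k : Fin n, ¬ k = p → ¬ k = q → wA c (p, q) k = 0 := by
    intro p q k h1 h2; simp [wA, h1, h2]
  rw [symSub_sum_apply, Fintype.sum_prod_type]
  by_cases hij : i = j
  · subst hij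
    have pw : ∀ p q : Fin n, (Pmat (wA c (p, q))).1 i i
        = (if p = i ∧ q = i then c i i else 0)
          + ((if p = i ∧ ¬ q = i then c i q / 12 else 0)
            + (if q = i ∧ ¬ p = i then c p i / 12 else 0)) := by
      intro p q
      rw [Pmat_apply, if_pos rfl]
      by_cases hp : p = i <;> by_cases hq : q = i
      · have h4 := rpow4 (show (0:ℝ) ≤ c i i / 16 by linarith [hc0 i i])
        simp only [hp, hq]
        simp [wA]
        linear_combination 16 * h4
      · have h4 := rpow4 (show (0:ℝ) ≤ c i q / 12 by linarith [hc0 i q])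
        have hne : ¬ i = q := fun h => hq h.symm
        simp only [hp]
        simp [wA, hq, hne]
        linear_combination h4
      · have h4 := rpow4 (show (0:ℝ) ≤ c p i / 12 by linarith [hc0 p i])
        have hne : ¬ i = p := fun h => hp h.symm
        simp only [hq]
        simp [wA, hp, hne]
        linear_combination h4
      · rw [hzero p q i (fun h => hp h.symm) (fun h => hq h.symm)]
        simp [hp, hq]
    rw [Finset.sum_congr rfl fun p _ => Finset.sum_congr rfl fun q _ => pw p q]
    simp only [Finset.sum_add_distrib]
    have S1 : ∑ p : Fin n, ∑ q : Fin n, (if p = i ∧ q = i then c i i else 0) = c i i := by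
      simp [ite_and, Finset.sum_ite_eq']
    have S2 : ∑ p : Fin n, ∑ q : Fin n, (if p = i ∧ ¬ q = i then c i q / 12 else 0)
        = ((∑ q, c i q) - c i i) / 12 := by
      have e1 : ∀ p q : Fin n, (if p = i ∧ ¬ q = i then c i q / 12 else 0)
          = if p = i then (if q = i then 0 else c i q / 12) else 0 := by
        intro p q
        by_cases hp : p = i <;> by_cases hq : q = i <;> simp [hp, hq]
      rw [Finset.sum_congr rfl fun p _ => Finset.sum_congr rfl fun q _ => e1 p q]
      rw [Finset.sum_congr rfl fun p _ => sum_if_const (p = i) (fun q => if q = i then 0 else c i q / 12)]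
      rw [sum_ite_eq_const i (∑ q : Fin n, (if q = i then 0 else c i q / 12))]
      rw [sum_ite_ne_univ i (fun q => c i q / 12), ← Finset.sum_div]
      ring
    have S3 : ∑ p : Fin n, ∑ q : Fin n, (if q = i ∧ ¬ p = i then c p i / 12 else 0)
        = ((∑ q, c i q) - c i i) / 12 := by
      rw [Finset.sum_comm]
      have e1 : ∀ q p : Fin n, (if q = i ∧ ¬ p = i then c p i / 12 else 0)
          = if q = i then (if p = i then 0 else c i p / 12) else 0 := by
        intro q p
        by_cases hp : p = i <;> by_cases hq : q = i <;> simp [hp, hq, hsymm p i]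
      rw [Finset.sum_congr rfl fun q _ => Finset.sum_congr rfl fun p _ => e1 q p]
      rw [Finset.sum_congr rfl fun q _ => sum_if_const (q = i) (fun p => if p = i then 0 else c i p / 12)]
      rw [sum_ite_eq_const i (∑ p : Fin n, (if p = i then 0 else c i p / 12))]
      rw [sum_ite_ne_univ i (fun p => c i p / 12), ← Finset.sum_div]
      ring
    rw [S1, S2, S3]
    simp only [if_pos rfl, if_true]
    unfold Dd Rrow
    ring
  · have pw : ∀ p q : Fin n, (Pmat (wA c (p, q))).1 i j
        = (if p = i ∧ q = j then c i j / 4 else 0)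
          + (if p = j ∧ q = i then c i j / 4 else 0) := by
      intro p q
      rw [Pmat_apply, if_neg hij]
      by_cases c1 : p = i ∧ q = j
      · obtain ⟨hpi, hqj⟩ := c1
        have h4 := rpow4 (show (0:ℝ) ≤ c i j / 12 by linarith [hc0 i j])
        have hne : ¬ j = i := fun h => hij h.symm
        simp only [hpi, hqj]
        simp [wA, hij, hne]
        linear_combination 3 * h4
      · by_cases c2 : p = j ∧ q = i
        · obtain ⟨hpj, hqi⟩ := c2
          have h4 := rpow4 (show (0:ℝ) ≤ c j i / 12 by linarith [hc0 j i])
          have hne : ¬ j = i := fun h => hij h.symm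
          simp only [hpj, hqi]
          simp [wA, hij, hne]
          linear_combination 3 * h4 + (1/4) * (hsymm j i)
        · rw [if_neg c1, if_neg c2]
          have key : wA c (p, q) i = 0 ∨ wA c (p, q) j = 0 := by
            by_cases hip : i = p
            · right
              have hqj : ¬ q = j := fun h => c1 ⟨hip.symm, h⟩
              exact hzero _ _ _ (fun h => hij (h.trans hip.symm).symm) (fun h => hqj h.symm)
            · by_cases hiq : i = q
              · right
                have hpj : ¬ p = j := fun h => c2 ⟨h, hiq.symm⟩
                exact hzero _ _ _ (fun h => hpj h.symm) (fun h => hij (hiq.trans h.symm))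
              · left
                exact hzero _ _ _ hip hiq
          rcases key with hk | hk <;> rw [hk] <;> ring
    rw [Finset.sum_congr rfl fun p _ => Finset.sum_congr rfl fun q _ => pw p q]
    simp only [Finset.sum_add_distrib]
    have S1 : ∑ p : Fin n, ∑ q : Fin n, (if p = i ∧ q = j then c i j / 4 else 0) = c i j / 4 := by
      simp [ite_and, Finset.sum_ite_eq']
    have S2 : ∑ p : Fin n, ∑ q : Fin n, (if p = j ∧ q = i then c i j / 4 else 0) = c i j / 4 := by
      simp [ite_and, Finset.sum_ite_eq']
    rw [S1, S2, if_neg hij]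
    ring

lemma Bmat_entries {n : ℕ} (c : Fin n → Fin n → ℝ) (hD0 : ∀ i, 0 ≤ Dd c i) (i j : Fin n) :
    (∑ o : Option (Fin n), Pmat (wB c o)).1 i j = 1/2 + (if i = j then Dd c i else 0) := by
  rw [symSub_sum_apply, Fintype.sum_option]
  have hu := rpow4 (show (0:ℝ) ≤ 6⁻¹ by norm_num)
  by_cases hij : i = j
  · subst hij
    have pws : ∀ p : Fin n, (Pmat (wB c (some p))).1 i i
        = if p = i then 1/3 + Dd c i else 0 := by
      intro p
      rw [Pmat_apply, if_pos rfl]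
      by_cases hp : p = i
      · have h4 := rpow4 (show (0:ℝ) ≤ 3⁻¹ + Dd c i by linarith [hD0 i])
        simp only [hp]
        simp [wB]
        linear_combination h4
      · have hne : ¬ i = p := fun h => hp h.symm
        simp [wB, hne, hp]
    rw [Finset.sum_congr rfl fun p _ => pws p]
    rw [Pmat_apply, if_pos rfl]
    have e1 : (wB c none i) ^ (4:ℕ) = 6⁻¹ := hu
    rw [e1]
    simp only [Finset.sum_ite_eq' Finset.univ i (fun _ => (1:ℝ)/3 + Dd c i)]
    simp
    ring
  · have pws : ∀ p : Fin n, (Pmat (wB c (some p))).1 i j = 0 := by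
      intro p
      rw [Pmat_apply, if_neg hij]
      by_cases hp : p = i
      · have hne : ¬ j = p := fun h => hij (hp ▸ h.symm : i = j)
        simp [wB, hne]
      · have hne : ¬ i = p := fun h => hp h.symm
        simp [wB, hne]
    rw [Finset.sum_congr rfl fun p _ => pws p]
    rw [Pmat_apply, if_neg hij]
    have e2 : (3:ℝ) * (wB c none i)^2 * (wB c none j)^2 = 3 * ((6:ℝ)⁻¹ ^ ((4:ℝ)⁻¹))^(4:ℕ) := by
      simp only [wB]
      ring
    rw [e2, hu, if_neg hij]
    norm_num

lemma key_alg {n : ℕ} (c : Fin n → Fin n → ℝ) (β : Fin n → Fin n → ℝ)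
    (hsymm : ∀ i j, c i j = c j i)
    (hrel : ∀ i j, i ≠ j → 6 * β i j = β i i + β j j)
    (hsum1 : ∑ i, ∑ j, c i j * β i j = 1) :
    ∑ i, Dd c i * β i i = 1/2 := by
  have point : ∀ i j : Fin n, c i j * β i j
      = (c i j * β i i/6 + c i j * β j j/6) + (if i = j then (2/3)*(c i i * β i i) else 0) := by
    intro i j
    by_cases hij : i = j
    · subst hij
      simp
      ring
    · have h := hrel i j hij
      simp only [if_neg hij, add_zero]
      linear_combination (c i j / 6) * h
  have swap : ∑ i, ∑ j, c i j * β j j = ∑ i, ∑ j, c i j * β i i := by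
    rw [Finset.sum_comm]
    exact Finset.sum_congr rfl fun i _ => Finset.sum_congr rfl fun j _ => by rw [hsymm j i]
  have expand : (1:ℝ) = (1/3) * (∑ i, ∑ j, c i j * β i i) + (2/3) * (∑ i, c i i * β i i) := by
    have e0 : ∑ i, ∑ j, c i j * β i j
        = ∑ i, ∑ j, ((c i j * β i i/6 + c i j * β j j/6)
          + (if i = j then (2/3)*(c i i * β i i) else 0)) :=
      Finset.sum_congr rfl fun i _ => Finset.sum_congr rfl fun j _ => point i j
    rw [e0] at hsum1
    simp only [Finset.sum_add_distrib] at hsum1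
    have e1 : ∑ i : Fin n, ∑ j : Fin n, (if i = j then (2/3)*(c i i * β i i) else 0)
        = ∑ i : Fin n, (2/3)*(c i i * β i i) := by
      refine Finset.sum_congr rfl fun i _ => ?_
      simp [Finset.sum_ite_eq]
    rw [e1] at hsum1
    have e2 : ∑ i : Fin n, ∑ j : Fin n, (c i j * β i i/6) = (∑ i, ∑ j, c i j * β i i)/6 := by
      rw [Finset.sum_div]
      exact Finset.sum_congr rfl fun i _ => by rw [Finset.sum_div]
    have e3 : ∑ i : Fin n, ∑ j : Fin n, (c i j * β j j/6) = (∑ i, ∑ j, c i j * β i i)/6 := by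
      rw [← swap, Finset.sum_div]
      exact Finset.sum_congr rfl fun i _ => by rw [Finset.sum_div]
    rw [e2, e3] at hsum1
    rw [← Finset.mul_sum] at hsum1
    linarith [hsum1]
  have expand2 : ∑ i, Dd c i * β i i
      = (1/3)*(∑ i, c i i * β i i) + (1/6) * (∑ i, ∑ j, c i j * β i i) := by
    have e4 : ∀ i, Dd c i * β i i
        = (1/3)*(c i i * β i i) + (1/6)*(∑ j, c i j * β i i) := by
      intro i
      have e5 : ∑ j, c i j * β i i = (∑ j, c i j) * β i i := by rw [Finset.sum_mul]
      rw [e5]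
      unfold Dd Rrow
      ring
    rw [Finset.sum_congr rfl fun i _ => e4 i]
    rw [Finset.sum_add_distrib, ← Finset.mul_sum, ← Finset.mul_sum]
  linarith [expand, expand2]

lemma coord_sq_le {n : ℕ} (x : EuclideanSpace ℝ (Fin n)) (i : Fin n) : (x i)^2 ≤ ‖x‖^2 := by
  have h2 : ‖x‖^2 = ∑ j, (x j)^2 := by
    rw [EuclideanSpace.norm_eq, Real.sq_sqrt (by positivity)]
    simp [sq_abs]
  rw [h2]
  exact Finset.single_le_sum (f := fun j => (x j)^2) (fun j _ => sq_nonneg _) (Finset.mem_univ i)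

lemma ae_norm_one {n : ℕ} (σ : Measure (EuclideanSpace ℝ (Fin n)))
    (hσprob : IsProbabilityMeasure σ)
    (hσsphere : σ (Metric.sphere (0 : EuclideanSpace ℝ (Fin n)) 1) = 1) :
    ∀ᵐ x ∂σ, ‖x‖ = 1 := by
  rw [MeasureTheory.ae_iff]
  have h1 : {x : EuclideanSpace ℝ (Fin n) | ¬ ‖x‖ = 1}
      = (Metric.sphere (0:EuclideanSpace ℝ (Fin n)) 1)ᶜ := by
    ext x; simp [mem_sphere_zero_iff_norm]
  rw [h1, measure_compl (Metric.isClosed_sphere).measurableSet (measure_ne_top σ _), hσsphere]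
  simp

lemma mono_integrable {n : ℕ} (σ : Measure (EuclideanSpace ℝ (Fin n)))
    (hσprob : IsProbabilityMeasure σ)
    (hσsphere : σ (Metric.sphere (0 : EuclideanSpace ℝ (Fin n)) 1) = 1) (i j : Fin n) :
    Integrable (fun x : EuclideanSpace ℝ (Fin n) => (x i)^2 * (x j)^2) σ := by
  have hcont : Continuous fun x : EuclideanSpace ℝ (Fin n) => (x i)^2 * (x j)^2 := by fun_prop
  refine (integrable_const (1:ℝ)).mono' hcont.aestronglyMeasurable ?_
  filter_upwards [ae_norm_one σ hσprob hσsphere] with x hx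
  have h1 : (x i)^2 ≤ 1 := by simpa [hx] using coord_sq_le x i
  have h2 : (x j)^2 ≤ 1 := by simpa [hx] using coord_sq_le x j
  have h3 : |(x i)^2 * (x j)^2| = (x i)^2 * (x j)^2 := abs_of_nonneg (by positivity)
  rw [Real.norm_eq_abs, h3]
  nlinarith [sq_nonneg (x i), sq_nonneg (x j)]

def rotFun {n : ℕ} (p q : Fin n) (x : EuclideanSpace ℝ (Fin n)) :
    EuclideanSpace ℝ (Fin n) :=
  WithLp.toLp 2 fun k => if k = p then (x p + x q)/Real.sqrt 2
    else if k = q then (x q - x p)/Real.sqrt 2 else x k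

lemma rotFun_norm {n : ℕ} (p q : Fin n) (hpq : p ≠ q) (x : EuclideanSpace ℝ (Fin n)) :
    ‖rotFun p q x‖ = ‖x‖ := by
  have key : ∀ y : EuclideanSpace ℝ (Fin n), ∑ k, ‖y k‖^2 = ∑ k, (y k)^2 := by
    intro y; simp [sq_abs, Real.norm_eq_abs]
  have hq : q ∈ (Finset.univ.erase p) := Finset.mem_erase.2 ⟨hpq.symm, Finset.mem_univ q⟩
  have hsum : ∑ k, (rotFun p q x k)^2 = ∑ k, (x k)^2 := by
    rw [← Finset.add_sum_erase _ _ (Finset.mem_univ p), ← Finset.add_sum_erase _ _ hq]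
    rw [← Finset.add_sum_erase (f := fun k => (x k)^2) _ (Finset.mem_univ p),
      ← Finset.add_sum_erase (f := fun k => (x k)^2) _ hq]
    have h2 : Real.sqrt 2 ^ 2 = 2 := Real.sq_sqrt (by norm_num)
    have e1 : rotFun p q x p = (x p + x q)/Real.sqrt 2 := by simp [rotFun]
    have e2 : rotFun p q x q = (x q - x p)/Real.sqrt 2 := by
      simp [rotFun, hpq.symm]
    have e3 : ∀ k, k ≠ p → k ≠ q → rotFun p q x k = x k := by
      intro k h1 h2; simp [rotFun, h1, h2]
    rw [e1, e2]
    have heq : ∑ k ∈ (Finset.univ.erase p).erase q, (rotFun p q x k)^2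
        = ∑ k ∈ (Finset.univ.erase p).erase q, (x k)^2 := by
      refine Finset.sum_congr rfl fun k hk => ?_
      have hk1 := (Finset.mem_erase.1 hk).1
      have hk2 := (Finset.mem_erase.1 (Finset.mem_erase.1 hk).2).1
      rw [e3 k hk2 hk1]
    rw [heq, div_pow, div_pow, h2]
    ring
  rw [EuclideanSpace.norm_eq, EuclideanSpace.norm_eq, key, key, hsum]

def rotL {n : ℕ} (p q : Fin n) (hpq : p ≠ q) :
    EuclideanSpace ℝ (Fin n) ≃ₗᵢ[ℝ] EuclideanSpace ℝ (Fin n) :=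
  { toFun := rotFun p q
    invFun := rotFun q p
    map_add' := by
      intro x y; ext k
      simp only [rotFun, PiLp.add_apply, PiLp.toLp_apply]
      split_ifs <;> ring
    map_smul' := by
      intro c x; ext k
      simp only [rotFun, PiLp.toLp_apply, PiLp.smul_apply, smul_eq_mul, RingHom.id_apply]
      split_ifs <;> ring
    left_inv := by
      intro x; ext k
      have h2 : Real.sqrt 2 ≠ 0 := by positivity
      by_cases hk : k = p
      · subst hk
        simp only [rotFun, PiLp.toLp_apply, if_pos rfl, if_neg hpq, if_neg hpq.symm, if_true, if_false]
        field_simp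
        rw [Real.sq_sqrt (by norm_num)]; ring
      · by_cases hk2 : k = q
        · subst hk2
          simp only [rotFun, PiLp.toLp_apply, if_pos rfl, if_neg hpq, if_neg hpq.symm, if_neg hk, if_true, if_false]
          field_simp
          rw [Real.sq_sqrt (by norm_num)]; ring
        · simp [rotFun, hk, hk2]
    right_inv := by
      intro x; ext k
      have h2 : Real.sqrt 2 ≠ 0 := by positivity
      by_cases hk : k = p
      · subst hk
        simp only [rotFun, PiLp.toLp_apply, if_pos rfl, if_neg hpq, if_neg hpq.symm, if_true, if_false]
        field_simp
        rw [Real.sq_sqrt (by norm_num)]; ring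
      · by_cases hk2 : k = q
        · subst hk2
          simp only [rotFun, PiLp.toLp_apply, if_pos rfl, if_neg hpq, if_neg hpq.symm, if_neg hk, if_true, if_false]
          field_simp
          rw [Real.sq_sqrt (by norm_num)]; ring
        · simp [rotFun, hk, hk2]
    norm_map' := rotFun_norm p q hpq }

lemma rotL_apply_p {n : ℕ} (p q : Fin n) (hpq : p ≠ q) (x : EuclideanSpace ℝ (Fin n)) :
    rotL p q hpq x p = (x p + x q)/Real.sqrt 2 := by simp [rotL, rotFun]

lemma rotL_apply_q {n : ℕ} (p q : Fin n) (hpq : p ≠ q) (x : EuclideanSpace ℝ (Fin n)) :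
    rotL p q hpq x q = (x q - x p)/Real.sqrt 2 := by simp [rotL, rotFun, hpq.symm]


/-- `Lf_Q~ ⊆ NN_Q~ ⊆ 2·(Lf_Q~ − Lf_Q~)`. -/
theorem stmt12 (n : ℕ) (hn : 1 ≤ n)
    (σ : Measure (EuclideanSpace ℝ (Fin n)))
    (hσprob : IsProbabilityMeasure σ)
    (hσsphere : σ (Metric.sphere (0 : EuclideanSpace ℝ (Fin n)) 1) = 1)
    (hσinv : ∀ O : EuclideanSpace ℝ (Fin n) ≃ₗᵢ[ℝ] EuclideanSpace ℝ (Fin n),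
      Measure.map (⇑O) σ = σ) :
    sect σ (LfQ n) ⊆ sect σ (NNQ n) ∧
    sect σ (NNQ n) ⊆
      {h : symSub n | ∃ a ∈ sect σ (LfQ n), ∃ b ∈ sect σ (LfQ n),
        h = (2:ℝ) • (a - b)} := by
  have hsph : ∀ᵐ x ∂σ, ‖x‖ = 1 := ae_norm_one σ hσprob hσsphere
  have hint : ∀ i j : Fin n, Integrable (fun x : EuclideanSpace ℝ (Fin n) => (x i)^2 * (x j)^2) σ :=
    mono_integrable σ hσprob hσsphere
  have hqint : ∀ m : symSub n, ∫ x, qfun m x ∂σ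
      = ∑ i, ∑ j, m.1 i j * ∫ x, (x i)^2 * (x j)^2 ∂σ := by
    intro m
    unfold qfun
    rw [MeasureTheory.integral_finset_sum]
    · refine Finset.sum_congr rfl fun i _ => ?_
      rw [MeasureTheory.integral_finset_sum]
      · refine Finset.sum_congr rfl fun j _ => ?_
        rw [← MeasureTheory.integral_const_mul]
        congr 1; funext x; ring
      · intro j _
        have he : (fun x : EuclideanSpace ℝ (Fin n) => m.1 i j * (x i)^2 * (x j)^2)
            = fun x => m.1 i j * ((x i)^2 * (x j)^2) := by funext x; ring
        rw [he]
        exact (hint i j).const_mul _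
    · intro i _
      apply MeasureTheory.integrable_finset_sum
      intro j _
      have he : (fun x : EuclideanSpace ℝ (Fin n) => m.1 i j * (x i)^2 * (x j)^2)
          = fun x => m.1 i j * ((x i)^2 * (x j)^2) := by funext x; ring
      rw [he]
      exact (hint i j).const_mul _
  have hβsum : ∑ i, ∑ j, ∫ x, (x i)^2 * (x j)^2 ∂σ = 1 := by
    have h1 : ∑ i, ∑ j, ∫ x, (x i)^2 * (x j)^2 ∂σ
        = ∫ x, ∑ i : Fin n, ∑ j : Fin n, (x i)^2 * (x j)^2 ∂σ := by
      rw [MeasureTheory.integral_finset_sum]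
      · exact Finset.sum_congr rfl fun i _ =>
          (MeasureTheory.integral_finset_sum _ fun j _ => hint i j).symm
      · exact fun i _ => MeasureTheory.integrable_finset_sum _ fun j _ => hint i j
    rw [h1]
    have h2 : ∀ᵐ x ∂σ, (∑ i : Fin n, ∑ j : Fin n, (x i)^2 * (x j)^2) = 1 := by
      filter_upwards [hsph] with x hx
      have hs : ∑ k, (x k)^2 = 1 := by
        have h3 : ‖x‖^2 = ∑ j, (x j)^2 := by
          rw [EuclideanSpace.norm_eq, Real.sq_sqrt (by positivity)]
          simp [sq_abs]
        rw [← h3, hx]; norm_num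
      calc ∑ i : Fin n, ∑ j : Fin n, (x i)^2 * (x j)^2
          = (∑ i, (x i)^2) * (∑ j, (x j)^2) := by rw [Finset.sum_mul_sum]
        _ = 1 := by rw [hs]; norm_num
    rw [MeasureTheory.integral_congr_ae h2]
    simp
  have hβrel : ∀ p q : Fin n, p ≠ q →
      6 * ∫ x, (x p)^2 * (x q)^2 ∂σ
        = (∫ x, (x p)^2 * (x p)^2 ∂σ) + ∫ x, (x q)^2 * (x q)^2 ∂σ := by
    intro p q hpq
    set O := rotL p q hpq with hO
    have hcont : Continuous fun x : EuclideanSpace ℝ (Fin n) => (x p)^2 * (x q)^2 := by fun_prop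
    have h1 : ∫ x, (x p)^2 * (x q)^2 ∂σ = ∫ x, (O x p)^2 * (O x q)^2 ∂σ := by
      conv_lhs => rw [← hσinv O]
      rw [MeasureTheory.integral_map O.continuous.measurable.aemeasurable
        hcont.aestronglyMeasurable]
    have h2 : ∀ x : EuclideanSpace ℝ (Fin n), (O x p)^2 * (O x q)^2
        = (1/4) * ((x p)^2*(x p)^2) + (1/4) * ((x q)^2*(x q)^2) - (1/2) * ((x p)^2*(x q)^2) := by
      intro x
      rw [hO, rotL_apply_p, rotL_apply_q]
      have h2 : Real.sqrt 2 ^ 2 = 2 := Real.sq_sqrt (by norm_num)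
      field_simp
      have h4 : Real.sqrt 2 ^ 4 = 4 := by rw [show Real.sqrt 2 ^ 4 = (Real.sqrt 2 ^ 2) ^ 2 by ring, h2]; norm_num
      linear_combination (-2 * (x p ^ 2 - x q ^ 2) ^ 2) * h4
    have h3 : ∫ x, (O x p)^2 * (O x q)^2 ∂σ
        = (1/4) * (∫ x, (x p)^2*(x p)^2 ∂σ) + (1/4) * (∫ x, (x q)^2*(x q)^2 ∂σ)
          - (1/2) * ∫ x, (x p)^2*(x q)^2 ∂σ := by
      rw [show (fun x : EuclideanSpace ℝ (Fin n) => (O x p)^2 * (O x q)^2)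
          = fun x => (1/4) * ((x p)^2*(x p)^2) + (1/4) * ((x q)^2*(x q)^2)
            - (1/2) * ((x p)^2*(x q)^2) from funext h2]
      rw [MeasureTheory.integral_sub, MeasureTheory.integral_add]
      · rw [MeasureTheory.integral_const_mul, MeasureTheory.integral_const_mul,
          MeasureTheory.integral_const_mul]
      · exact (hint p p).const_mul _
      · exact (hint q q).const_mul _
      · exact (((hint p p).const_mul _).add ((hint q q).const_mul _))
      · exact (hint p q).const_mul _
    rw [h1, h3] at *
    linarith [h1]
  constructor
  · rintro a ⟨hi, hL⟩
    obtain ⟨k, w, hw⟩ := hL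
    refine ⟨hi, ?_⟩
    intro i j
    rw [hw, symSub_sum_apply]
    apply Finset.sum_nonneg
    intro l _
    rw [Pmat_apply]
    split_ifs
    · positivity
    · positivity
  · rintro h ⟨hih, hnn⟩
    classical
    have hent : ∀ i j, (h + rQ n).1 i j = h.1 i j + 1 := fun i j => rfl
    set c : Fin n → Fin n → ℝ := fun i j => h.1 i j + 1 with hcdef
    have hcsymm : ∀ i j, c i j = c j i := by
      intro i j; simp only [hcdef]; rw [h.2 i j]
    have hc0 : ∀ i j, 0 ≤ c i j := by
      intro i j
      have h1 := hnn i j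
      rw [hent i j] at h1
      exact h1
    have hD0 : ∀ i, 0 ≤ Dd c i := by
      intro i
      have hR : 0 ≤ Rrow c i := by
        unfold Rrow
        rw [sub_nonneg]
        exact Finset.single_le_sum (f := fun j => c i j) (fun j _ => hc0 i j) (Finset.mem_univ i)
      have h1 := hc0 i i
      have hDi : Dd c i = c i i / 2 + Rrow c i / 6 := rfl
      rw [hDi]
      exact add_nonneg (div_nonneg h1 (by norm_num)) (div_nonneg hR (by norm_num))
    set βf : Fin n → Fin n → ℝ := fun i j => ∫ x, (x i)^2 * (x j)^2 ∂σ with hβdef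
    have hβsymm : ∀ i j, βf i j = βf j i := by
      intro i j; simp only [hβdef]
      congr 1; funext x; ring
    have hβrel' : ∀ i j : Fin n, i ≠ j → 6 * βf i j = βf i i + βf j j := by
      intro i j hij
      exact hβrel i j hij
    have hc1 : ∑ i, ∑ j, c i j * βf i j = 1 := by
      have hh0 : ∑ i, ∑ j, h.1 i j * βf i j = 0 := by
        rw [← hqint h]
        exact hih
      have e : ∀ i j : Fin n, c i j * βf i j = h.1 i j * βf i j + βf i j := by
        intro i j; simp only [hcdef]; ring
      rw [Finset.sum_congr rfl fun i _ => Finset.sum_congr rfl fun j _ => e i j]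
      simp only [Finset.sum_add_distrib]
      rw [hh0, hβsum]
      norm_num
    have hkey : ∑ i, Dd c i * βf i i = 1/2 := key_alg c βf hcsymm hβrel' hc1
    set Asum : symSub n := ∑ pq : Fin n × Fin n, Pmat (wA c pq) with hAdef
    set Bsum : symSub n := ∑ o : Option (Fin n), Pmat (wB c o) with hBdef
    have hAe : ∀ i j, Asum.1 i j = c i j / 2 + (if i = j then Dd c i else 0) :=
      Amat_entries c hcsymm hc0
    have hBe : ∀ i j, Bsum.1 i j = 1/2 + (if i = j then Dd c i else 0) :=
      Bmat_entries c hD0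
    have hsub : ∀ (X : symSub n) i j, (X - rQ n).1 i j = X.1 i j - 1 := fun _ _ _ => rfl
    refine ⟨Asum - rQ n, ⟨?_, ?_⟩, Bsum - rQ n, ⟨?_, ?_⟩, ?_⟩
    · -- integral of Asum - rQ n is 0
      rw [hqint]
      have e : ∀ i j : Fin n, (Asum - rQ n).1 i j * βf i j
          = (1/2) * (c i j * βf i j) + (if i = j then Dd c i * βf i i else 0) - βf i j := by
        intro i j
        rw [hsub, hAe]
        by_cases hij : i = j
        · subst hij; simp only [eq_self_iff_true, if_true]; ring
        · simp only [if_neg hij]; ring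
      rw [Finset.sum_congr rfl fun i _ => Finset.sum_congr rfl fun j _ => e i j]
      simp only [Finset.sum_sub_distrib, Finset.sum_add_distrib]
      have e2 : ∑ i : Fin n, ∑ j : Fin n, (if i = j then Dd c i * βf i i else 0)
          = ∑ i, Dd c i * βf i i := by
        refine Finset.sum_congr rfl fun i _ => ?_
        simp [Finset.sum_ite_eq]
      rw [e2]
      have e3 : ∑ i : Fin n, ∑ j : Fin n, (1/2) * (c i j * βf i j)
          = (1/2) * ∑ i, ∑ j, c i j * βf i j := by
        rw [Finset.mul_sum]
        exact Finset.sum_congr rfl fun i _ => by rw [Finset.mul_sum]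
      rw [e3, hc1, hkey, hβsum]
      norm_num
    · -- Asum - rQ n + rQ n ∈ LfQ n
      rw [sub_add_cancel, hAdef]
      exact sum_Pmat_mem _
    · -- integral of Bsum - rQ n is 0
      rw [hqint]
      have e : ∀ i j : Fin n, (Bsum - rQ n).1 i j * βf i j
          = (if i = j then Dd c i * βf i i else 0) - (1/2) * βf i j := by
        intro i j
        rw [hsub, hBe]
        by_cases hij : i = j
        · subst hij; simp only [eq_self_iff_true, if_true]; ring
        · simp only [if_neg hij]; ring
      rw [Finset.sum_congr rfl fun i _ => Finset.sum_congr rfl fun j _ => e i j]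
      simp only [Finset.sum_sub_distrib]
      have e2 : ∑ i : Fin n, ∑ j : Fin n, (if i = j then Dd c i * βf i i else 0)
          = ∑ i, Dd c i * βf i i := by
        refine Finset.sum_congr rfl fun i _ => ?_
        simp [Finset.sum_ite_eq]
      have e3 : ∑ i : Fin n, ∑ j : Fin n, (1/2) * βf i j
          = (1/2) * ∑ i, ∑ j, βf i j := by
        rw [Finset.mul_sum]
        exact Finset.sum_congr rfl fun i _ => by rw [Finset.mul_sum]
      rw [e2, e3, hkey, hβsum]
      norm_num
    · rw [sub_add_cancel, hBdef]
      exact sum_Pmat_mem _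
    · -- h = 2 • (difference)
      apply Subtype.ext
      funext i j
      have lhs : h.1 i j = c i j - 1 := by simp only [hcdef]; ring
      have rhs : (((2:ℝ) • (Asum - rQ n - (Bsum - rQ n)) : symSub n)).1 i j
          = 2 * (Asum.1 i j - Bsum.1 i j) := by
        simp only [SetLike.val_smul, AddSubgroupClass.coe_sub, Pi.smul_apply, Pi.sub_apply,
          smul_eq_mul]
        ring
      show h.1 i j = _
      rw [rhs, hAe, hBe, lhs]
      ring
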